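/- Let N ≥ 1 be an integer, a, b ≥ 0, and let V : ℝᴺ → ℝ be differentiable and satisfy, for every x ∈ ℝᴺ and every 1 ≤ i ≤ N, |∂_{x_i}V(x)| ≤ (a/N)(1 + x_i² + (1/N)∑_{j=1}^N x_j²)^{1/2} + b/N. Then for all x, y ∈ ℝᴺ, |V(x) − V(y)| ≤ (a + b)·d + 2a·d·(m₁ + m₂)^{1/2}, where d = ((1/N)∑_{i=1}^N (x_i − y_i)²)^{1/2}, m₁ = (1/N)∑_{i=1}^N x_i², and m₂ = (1/N)∑_{i=1}^N y_i². -/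

import Mathlib

open Finset Real

/-- Cauchy–Schwarz in square-root form for nonnegative sequences. -/
lemma cs_sqrt {N : ℕ} (f g : Fin N → ℝ) (hf : ∀ i, 0 ≤ f i) (hg : ∀ i, 0 ≤ g i) :
    ∑ i, f i * g i ≤ Real.sqrt (∑ i, f i ^ 2) * Real.sqrt (∑ i, g i ^ 2) := by
  have h := Finset.sum_mul_sq_le_sq_mul_sq Finset.univ f g
  have hnn : 0 ≤ ∑ i, f i * g i :=
    Finset.sum_nonneg fun i _ => mul_nonneg (hf i) (hg i)
  calc ∑ i, f i * g i = Real.sqrt ((∑ i, f i * g i) ^ 2) := (Real.sqrt_sq hnn).symm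
    _ ≤ Real.sqrt ((∑ i, f i ^ 2) * ∑ i, g i ^ 2) := Real.sqrt_le_sqrt h
    _ = _ := Real.sqrt_mul (Finset.sum_nonneg fun i _ => sq_nonneg _) _

lemma sqrt_add_le' {A B : ℝ} (hA : 0 ≤ A) (hB : 0 ≤ B) :
    Real.sqrt (A + B) ≤ Real.sqrt A + Real.sqrt B := by
  rw [show A + B = Real.sqrt A ^ 2 + Real.sqrt B ^ 2 by
    rw [Real.sq_sqrt hA, Real.sq_sqrt hB]]
  have h : Real.sqrt A ^ 2 + Real.sqrt B ^ 2 ≤ (Real.sqrt A + Real.sqrt B) ^ 2 := by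
    nlinarith [Real.sqrt_nonneg A, Real.sqrt_nonneg B]
  calc Real.sqrt (Real.sqrt A ^ 2 + Real.sqrt B ^ 2)
      ≤ Real.sqrt ((Real.sqrt A + Real.sqrt B) ^ 2) := Real.sqrt_le_sqrt h
    _ = _ := Real.sqrt_sq (by positivity)

/-- A gradient bound of the form
`|∂ᵢV(x)| ≤ (a/N)(1 + xᵢ² + (1/N)∑ⱼxⱼ²)^(1/2) + b/N` implies a locally
Lipschitz-type estimate for `V`. -/
theorem lipschitz_estimate_from_gradient_decay {N : ℕ} (hN : 1 ≤ N) {a b : ℝ}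
    (ha : 0 ≤ a) (hb : 0 ≤ b)
    (V : (Fin N → ℝ) → ℝ) (hV : Differentiable ℝ V)
    (hgrad : ∀ (x : Fin N → ℝ) (i : Fin N),
      |fderiv ℝ V x (Pi.single i 1)| ≤
        a / N * Real.sqrt (1 + (x i) ^ 2 + (1 / N) * ∑ j, (x j) ^ 2) + b / N) :
    ∀ x y : Fin N → ℝ,
      |V x - V y| ≤
        (a + b) * Real.sqrt ((1 / N) * ∑ i, (x i - y i) ^ 2)
          + 2 * a * Real.sqrt ((1 / N) * ∑ i, (x i - y i) ^ 2) *
            Real.sqrt ((1 / N) * ∑ i, (x i) ^ 2 + (1 / N) * ∑ i, (y i) ^ 2) := by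
  intro x y
  have hNpos : (0 : ℝ) < N := by exact_mod_cast Nat.lt_of_lt_of_le Nat.zero_lt_one hN
  set v : Fin N → ℝ := fun i => x i - y i with hv
  set d2 : ℝ := ∑ i, (x i - y i) ^ 2 with hd2
  have hd2nn : 0 ≤ d2 := Finset.sum_nonneg fun i _ => sq_nonneg _
  set d : ℝ := Real.sqrt ((1 / N) * d2) with hd
  have hdnn : 0 ≤ d := Real.sqrt_nonneg _
  -- key pointwise bound on the directional derivative
  have key : ∀ z : Fin N → ℝ,
      |fderiv ℝ V z (x - y)| ≤
        (a + b) * d + 2 * a * d * Real.sqrt ((1 / N) * ∑ i, (z i) ^ 2) := by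
    intro z
    set m : ℝ := (1 / N) * ∑ i, (z i) ^ 2 with hm
    have hSznn : (0:ℝ) ≤ ∑ i, (z i) ^ 2 := Finset.sum_nonneg fun i _ => sq_nonneg _
    have hmnn : 0 ≤ m := by positivity
    -- expand the direction as a sum of Pi.single's
    have hexp : fderiv ℝ V z (x - y) = ∑ i, v i * fderiv ℝ V z (Pi.single i 1) := by
      have hxy : (x - y) = ∑ i, v i • (Pi.single i (1:ℝ) : Fin N → ℝ) := by
        rw [← Finset.univ_sum_single (x - y)]
        refine Finset.sum_congr rfl fun i _ => ?_
        funext j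
        simp only [Pi.single_apply, Pi.smul_apply, smul_eq_mul, hv]
        split_ifs with h <;> simp [h]
      rw [hxy, map_sum]
      refine Finset.sum_congr rfl fun i _ => ?_
      rw [map_smul]; rfl
    rw [hexp]
    have step1 : |∑ i, v i * fderiv ℝ V z (Pi.single i 1)| ≤
        ∑ i, |v i| * (a / N * Real.sqrt (1 + (z i) ^ 2 + m) + b / N) := by
      refine (Finset.abs_sum_le_sum_abs _ _).trans (Finset.sum_le_sum fun i _ => ?_)
      rw [abs_mul]
      exact mul_le_mul_of_nonneg_left (hgrad z i) (abs_nonneg _)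
    have step2 : ∀ i, Real.sqrt (1 + (z i) ^ 2 + m) ≤ Real.sqrt (1 + m) + |z i| := by
      intro i
      have : (1 : ℝ) + (z i) ^ 2 + m = (1 + m) + (z i)^2 := by ring
      rw [this]
      calc Real.sqrt ((1 + m) + (z i)^2)
          ≤ Real.sqrt (1 + m) + Real.sqrt ((z i)^2) :=
            sqrt_add_le' (by linarith) (sq_nonneg _)
        _ = Real.sqrt (1 + m) + |z i| := by rw [Real.sqrt_sq_eq_abs]
    -- Cauchy-Schwarz bounds
    have cs1 : ∑ i, |v i| ≤ Real.sqrt N * Real.sqrt d2 := by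
      have := cs_sqrt (fun i => |v i|) (fun _ => (1:ℝ)) (fun i => abs_nonneg _)
        (fun _ => zero_le_one)
      simpa [sq_abs, hd2, mul_comm] using this
    have cs2 : ∑ i, |v i| * |z i| ≤ Real.sqrt d2 * Real.sqrt (∑ i, (z i) ^ 2) := by
      have := cs_sqrt (fun i => |v i|) (fun i => |z i|) (fun i => abs_nonneg _)
        (fun i => abs_nonneg _)
      simpa [sq_abs, hd2] using this
    have hsqrtN : Real.sqrt N > 0 := Real.sqrt_pos.2 hNpos
    have hdN : Real.sqrt d2 = Real.sqrt N * d := by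
      rw [hd, Real.sqrt_mul (by positivity), one_div, Real.sqrt_inv,
        ← mul_assoc, mul_inv_cancel₀ (ne_of_gt hsqrtN), one_mul]
    have hmz : Real.sqrt (∑ i, (z i) ^ 2) = Real.sqrt N * Real.sqrt m := by
      rw [hm, Real.sqrt_mul (by positivity), one_div, Real.sqrt_inv, ← mul_assoc,
        mul_inv_cancel₀ (ne_of_gt hsqrtN), one_mul]
    have hNsq : Real.sqrt N * Real.sqrt N = (N : ℝ) :=
      Real.mul_self_sqrt (le_of_lt hNpos)
    have step3 : ∑ i, |v i| * (a / N * Real.sqrt (1 + (z i) ^ 2 + m) + b / N) ≤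
        a / N * Real.sqrt (1 + m) * (∑ i, |v i|) + a / N * (∑ i, |v i| * |z i|)
          + b / N * ∑ i, |v i| := by
      have hterm : ∀ i ∈ Finset.univ,
          |v i| * (a / N * Real.sqrt (1 + (z i) ^ 2 + m) + b / N) ≤
            a / N * Real.sqrt (1 + m) * |v i| + a / N * (|v i| * |z i|)
              + b / N * |v i| := by
        intro i _
        have h2 := step2 i
        have hvnn : 0 ≤ |v i| := abs_nonneg _
        have haN : 0 ≤ a / N := by positivity
        nlinarith [mul_le_mul_of_nonneg_left h2 hvnn]
      calc ∑ i, |v i| * (a / N * Real.sqrt (1 + (z i) ^ 2 + m) + b / N)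
          ≤ ∑ i, (a / N * Real.sqrt (1 + m) * |v i| + a / N * (|v i| * |z i|)
              + b / N * |v i|) := Finset.sum_le_sum hterm
        _ = _ := by
            rw [Finset.sum_add_distrib, Finset.sum_add_distrib, ← Finset.mul_sum,
              ← Finset.mul_sum, ← Finset.mul_sum]
    have hsqrt1m : Real.sqrt (1 + m) ≤ 1 + Real.sqrt m := by
      calc Real.sqrt (1 + m) ≤ Real.sqrt 1 + Real.sqrt m := sqrt_add_le' zero_le_one hmnn
        _ = 1 + Real.sqrt m := by rw [Real.sqrt_one]
    have hsmnn : 0 ≤ Real.sqrt m := Real.sqrt_nonneg _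
    have bound1 : Real.sqrt (1 + m) * ∑ i, |v i| ≤ (1 + Real.sqrt m) * ((N:ℝ) * d) := by
      have h1 : ∑ i, |v i| ≤ (N:ℝ) * d := by
        calc ∑ i, |v i| ≤ Real.sqrt N * Real.sqrt d2 := cs1
          _ = (N:ℝ) * d := by rw [hdN, ← mul_assoc, hNsq]
      have := mul_le_mul (le_of_lt (lt_of_le_of_lt hsqrt1m (lt_add_one _))) h1
        (Finset.sum_nonneg fun i _ => abs_nonneg _) (by positivity)
      calc Real.sqrt (1+m) * ∑ i, |v i| ≤ (1 + Real.sqrt m) * ∑ i, |v i| :=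
            mul_le_mul_of_nonneg_right hsqrt1m (Finset.sum_nonneg fun i _ => abs_nonneg _)
        _ ≤ (1 + Real.sqrt m) * ((N:ℝ) * d) :=
            mul_le_mul_of_nonneg_left h1 (by positivity)
    have bound2 : ∑ i, |v i| * |z i| ≤ (N:ℝ) * d * Real.sqrt m := by
      calc ∑ i, |v i| * |z i| ≤ Real.sqrt d2 * Real.sqrt (∑ i, (z i)^2) := cs2
        _ = (N:ℝ) * d * Real.sqrt m := by
            rw [hdN, hmz, show Real.sqrt N * d * (Real.sqrt N * Real.sqrt m)
              = Real.sqrt N * Real.sqrt N * (d * Real.sqrt m) by ring, hNsq]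
            ring
    have bound3 : ∑ i, |v i| ≤ (N:ℝ) * d := by
      calc ∑ i, |v i| ≤ Real.sqrt N * Real.sqrt d2 := cs1
        _ = (N:ℝ) * d := by rw [hdN, ← mul_assoc, hNsq]
    have haN : 0 ≤ a / N := by positivity
    have hbN : 0 ≤ b / N := by positivity
    have final : a / N * Real.sqrt (1 + m) * (∑ i, |v i|) + a / N * (∑ i, |v i| * |z i|)
          + b / N * ∑ i, |v i|
        ≤ a / N * Real.sqrt (1 + m) * ((N:ℝ)*d) + a / N * ((N:ℝ)*d*Real.sqrt m)
          + b / N * ((N:ℝ)*d) :=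
      add_le_add (add_le_add
        (mul_le_mul_of_nonneg_left bound3 (by positivity))
        (mul_le_mul_of_nonneg_left bound2 haN))
        (mul_le_mul_of_nonneg_left bound3 hbN)
    have final2 : a / N * Real.sqrt (1 + m) * ((N:ℝ)*d) + a / N * ((N:ℝ)*d*Real.sqrt m)
          + b / N * ((N:ℝ)*d)
        ≤ a / N * (1 + Real.sqrt m) * ((N:ℝ)*d) + a / N * ((N:ℝ)*d*Real.sqrt m)
          + b / N * ((N:ℝ)*d) :=
      add_le_add_left (add_le_add_left (mul_le_mul_of_nonneg_right
        (mul_le_mul_of_nonneg_left hsqrt1m haN) (by positivity)) _) _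
    refine ((step1.trans step3).trans (final.trans final2)).trans (le_of_eq ?_)
    field_simp
    ring
  -- the path from y to x
  set γ : ℝ → (Fin N → ℝ) := fun t => y + t • (x - y) with hγ
  have hγderiv : ∀ t : ℝ, HasDerivAt γ (x - y) t := by
    intro t
    have h1 : HasDerivAt (fun t : ℝ => t • (x - y)) (x - y) t := by
      simpa using (hasDerivAt_id t).smul_const (x - y)
    exact h1.const_add y
  have hgderiv : ∀ t : ℝ, HasDerivAt (fun t => V (γ t)) (fderiv ℝ V (γ t) (x - y)) t := by
    intro t
    exact (hV (γ t)).hasFDerivAt.comp_hasDerivAt t (hγderiv t)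
  -- bound the sum of squares along the segment
  have hseg : ∀ t ∈ Set.Icc (0:ℝ) 1, ∑ i, (γ t i) ^ 2 ≤ (∑ i, (x i)^2) + ∑ i, (y i)^2 := by
    intro t ht
    rw [← Finset.sum_add_distrib]
    refine Finset.sum_le_sum fun i _ => ?_
    have h0 : (0:ℝ) ≤ t := ht.1
    have h1 : t ≤ 1 := ht.2
    have : γ t i = y i + t * (x i - y i) := rfl
    rw [this]
    nlinarith [sq_nonneg (x i - y i), sq_nonneg (x i), sq_nonneg (y i),
      mul_nonneg (mul_nonneg h0 (sub_nonneg.2 h1)) (sq_nonneg (x i - y i)),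
      sq_nonneg (t * (x i - y i) - x i)]
  -- bound on [0,1]
  set C : ℝ := (a + b) * d + 2 * a * d *
    Real.sqrt ((1 / N) * ∑ i, (x i) ^ 2 + (1 / N) * ∑ i, (y i) ^ 2) with hC
  have bound : ∀ t ∈ Set.Ico (0:ℝ) 1, ‖fderiv ℝ V (γ t) (x - y)‖ ≤ C := by
    intro t ht
    have ht' : t ∈ Set.Icc (0:ℝ) 1 := ⟨ht.1, le_of_lt ht.2⟩
    have h1 := key (γ t)
    have h2 : Real.sqrt ((1 / N) * ∑ i, (γ t i) ^ 2) ≤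
        Real.sqrt ((1 / N) * ∑ i, (x i) ^ 2 + (1 / N) * ∑ i, (y i) ^ 2) := by
      refine Real.sqrt_le_sqrt ?_
      rw [← mul_add]
      exact mul_le_mul_of_nonneg_left (hseg t ht') (by positivity)
    have h3 := mul_le_mul_of_nonneg_left h2 (by positivity : (0:ℝ) ≤ 2 * a * d)
    rw [Real.norm_eq_abs, hC]
    exact h1.trans (add_le_add_right h3 _)
  have hmain : ‖(fun t => V (γ t)) 1 - (fun t => V (γ t)) 0‖ ≤ C := by
    refine norm_image_sub_le_of_norm_deriv_le_segment_01'
      (f' := fun t => fderiv ℝ V (γ t) (x - y)) (fun t _ => (hgderiv t).hasDerivWithinAt) bound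
  have hγ1 : γ 1 = x := by simp [hγ]
  have hγ0 : γ 0 = y := by simp [hγ]
  simpa [hγ1, hγ0, Real.norm_eq_abs] using hmain
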